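/- For every ordinal λ, the map sending a finite subset p = {p_0 > p_1 > ... > p_{n-1}} of λ to the ordinal sum 2^{p_0} + 2^{p_1} + ... + 2^{p_{n-1}} (ordinal exponentiation and addition, summed in decreasing order of exponents) is an order isomorphism from the collection of finite subsets of λ, equipped with the top-down lexicographic order, onto the ordinal 2^λ. -/

import Mathlib

/-- The top-down lexicographic order on finite sets of ordinals:
`p < q` iff `p ≠ q` and the maximum of the symmetric difference `p ∆ q` belongs to `q`. -/
def tdLex (p q : Finset Ordinal) : Prop :=
  ∃ m ∈ symmDiff p q, m ∈ q ∧ ∀ x ∈ symmDiff p q, x ≤ m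

/-- For `p = {p_0 > p_1 > ... > p_{n-1}}`, the ordinal sum
`2 ^ p_0 + 2 ^ p_1 + ... + 2 ^ p_{n-1}` (summed in decreasing order of exponents);
the empty set is sent to `0`. -/
noncomputable def twoPowSum (p : Finset Ordinal) : Ordinal :=
  if h : p.Nonempty then
    (2 : Ordinal) ^ (p.max' h) + twoPowSum (p.erase (p.max' h))
  else 0
termination_by p.card
decreasing_by
  exact Finset.card_erase_lt_of_mem (p.max'_mem h)

open Ordinal

lemma twoPowSum_empty : twoPowSum ∅ = 0 := by rw [twoPowSum]; simp

lemma twoPowSum_eq (p : Finset Ordinal) (h : p.Nonempty) :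
    twoPowSum p = 2 ^ p.max' h + twoPowSum (p.erase (p.max' h)) := by
  rw [twoPowSum]; simp [h]

lemma two_opow_succ (a : Ordinal) : (2:Ordinal) ^ (a + 1) = 2 ^ a + 2 ^ a := by
  rw [opow_add, opow_one, ← one_add_one_eq_two, mul_add, mul_one]

lemma twoPowSum_lt_aux : ∀ (n : ℕ) (p : Finset Ordinal), p.card ≤ n →
    ∀ m : Ordinal, (∀ a ∈ p, a < m) → twoPowSum p < 2 ^ m := by
  intro n
  induction n with
  | zero =>
    intro p hp m _
    rw [Nat.le_zero, Finset.card_eq_zero] at hp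
    subst hp
    rw [twoPowSum_empty]
    exact opow_pos m two_pos
  | succ n ih =>
    intro p hp m hm
    rcases p.eq_empty_or_nonempty with rfl | h
    · rw [twoPowSum_empty]; exact opow_pos m two_pos
    · rw [twoPowSum_eq p h]
      set M := p.max' h with hM
      have hMm : M < m := hm _ (p.max'_mem h)
      have hcard : (p.erase M).card ≤ n := by
        have := Finset.card_erase_lt_of_mem (p.max'_mem h)
        rw [hM]
        omega
      have h1 : twoPowSum (p.erase M) < 2 ^ M := by
        apply ih _ hcard
        intro a ha
        rcases Finset.mem_erase.mp ha with ⟨hne, hap⟩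
        exact lt_of_le_of_ne (Finset.le_max' p a hap) hne
      calc 2 ^ M + twoPowSum (p.erase M) < 2 ^ M + 2 ^ M := by
            exact (add_lt_add_iff_left _).mpr h1
        _ = 2 ^ (M + 1) := (two_opow_succ M).symm
        _ ≤ 2 ^ m := opow_le_opow_right two_pos (Order.add_one_le_of_lt hMm)

lemma twoPowSum_lt (p : Finset Ordinal) (m : Ordinal) (hm : ∀ a ∈ p, a < m) :
    twoPowSum p < 2 ^ m :=
  twoPowSum_lt_aux p.card p le_rfl m hm

lemma le_twoPowSum (p : Finset Ordinal) (m : Ordinal) (hm : m ∈ p)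
    (hmax : ∀ a ∈ p, a ≤ m) : 2 ^ m ≤ twoPowSum p := by
  have h : p.Nonempty := ⟨m, hm⟩
  have hM : p.max' h = m :=
    le_antisymm (Finset.max'_le _ _ _ hmax) (Finset.le_max' _ _ hm)
  rw [twoPowSum_eq p h, hM]
  exact le_self_add

lemma twoPowSum_union_aux : ∀ (n : ℕ) (A B : Finset Ordinal), A.card ≤ n →
    (∀ a ∈ A, ∀ b ∈ B, b < a) → twoPowSum (A ∪ B) = twoPowSum A + twoPowSum B := by
  intro n
  induction n with
  | zero =>
    intro A B hA _
    rw [Nat.le_zero, Finset.card_eq_zero] at hA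
    subst hA
    simp [twoPowSum_empty]
  | succ n ih =>
    intro A B hA hAB
    rcases A.eq_empty_or_nonempty with rfl | h
    · simp [twoPowSum_empty]
    · set M := A.max' h with hM
      have hMA : M ∈ A := A.max'_mem h
      have hMB : M ∉ B := fun hb => lt_irrefl M (hAB M hMA M hb)
      have hU : (A ∪ B).Nonempty := ⟨M, Finset.mem_union_left B hMA⟩
      have hUM : (A ∪ B).max' hU = M := by
        apply le_antisymm
        · apply Finset.max'_le
          intro y hy
          rcases Finset.mem_union.mp hy with hy | hy
          · exact Finset.le_max' A y hy
          · exact le_of_lt (hAB M hMA y hy)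
        · exact Finset.le_max' _ _ (Finset.mem_union_left B hMA)
      have herase : (A ∪ B).erase M = A.erase M ∪ B := by
        rw [Finset.erase_union_distrib, Finset.erase_eq_of_notMem hMB]
      have hcard : (A.erase M).card ≤ n := by
        have := Finset.card_erase_lt_of_mem hMA
        omega
      have hAB' : ∀ a ∈ A.erase M, ∀ b ∈ B, b < a := fun a ha b hb =>
        hAB a (Finset.mem_of_mem_erase ha) b hb
      rw [twoPowSum_eq (A ∪ B) hU, hUM, herase, ih _ _ hcard hAB',
        twoPowSum_eq A h, ← hM, add_assoc]

lemma twoPowSum_union (A B : Finset Ordinal)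
    (hAB : ∀ a ∈ A, ∀ b ∈ B, b < a) : twoPowSum (A ∪ B) = twoPowSum A + twoPowSum B :=
  twoPowSum_union_aux A.card A B le_rfl hAB

lemma tdLex_lt (p q : Finset Ordinal) (h : tdLex p q) :
    twoPowSum p < twoPowSum q := by
  obtain ⟨m, hmd, hmq, hmax⟩ := h
  have hmp : m ∉ p := by
    rcases Finset.mem_symmDiff.mp hmd with ⟨_, hnq⟩ | ⟨_, hnp⟩
    · exact absurd hmq hnq
    · exact hnp
  classical
  have hfilter : p.filter (fun x => m < x) = q.filter (fun x => m < x) := by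
    ext x
    simp only [Finset.mem_filter]
    constructor
    · rintro ⟨hx, hmx⟩
      refine ⟨?_, hmx⟩
      by_contra hxq
      exact absurd (hmax x (Finset.mem_symmDiff.mpr (Or.inl ⟨hx, hxq⟩))) (not_le.mpr hmx)
    · rintro ⟨hx, hmx⟩
      refine ⟨?_, hmx⟩
      by_contra hxp
      exact absurd (hmax x (Finset.mem_symmDiff.mpr (Or.inr ⟨hx, hxp⟩))) (not_le.mpr hmx)
  have hsplit : ∀ r : Finset Ordinal, twoPowSum r =
      twoPowSum (r.filter (fun x => m < x)) + twoPowSum (r.filter (fun x => ¬ m < x)) := by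
    intro r
    rw [← twoPowSum_union _ _ (fun a ha b hb =>
      lt_of_le_of_lt (not_lt.mp (Finset.mem_filter.mp hb).2) (Finset.mem_filter.mp ha).2)]
    rw [Finset.filter_union_filter_not_eq]
  rw [hsplit p, hsplit q, hfilter]
  apply (add_lt_add_iff_left _).mpr
  have h1 : twoPowSum (p.filter (fun x => ¬ m < x)) < 2 ^ m := by
    apply twoPowSum_lt
    intro a ha
    rcases Finset.mem_filter.mp ha with ⟨hap, ham⟩
    exact lt_of_le_of_ne (not_lt.mp ham) (fun h => hmp (h ▸ hap))
  have h2 : 2 ^ m ≤ twoPowSum (q.filter (fun x => ¬ m < x)) := by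
    apply le_twoPowSum _ m (Finset.mem_filter.mpr ⟨hmq, lt_irrefl m⟩)
    intro a ha
    exact not_lt.mp (Finset.mem_filter.mp ha).2
  exact lt_of_lt_of_le h1 h2

lemma tdLex_total (p q : Finset Ordinal) (h : p ≠ q) : tdLex p q ∨ tdLex q p := by
  have hd : (symmDiff p q).Nonempty := by
    rw [Finset.nonempty_iff_ne_empty]
    intro he
    exact h (symmDiff_eq_bot.mp he)
  set m := (symmDiff p q).max' hd with hm
  have hmem : m ∈ symmDiff p q := (symmDiff p q).max'_mem hd
  have hmax : ∀ x ∈ symmDiff p q, x ≤ m := fun x hx => Finset.le_max' _ x hx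
  rcases Finset.mem_symmDiff.mp hmem with ⟨hp, _⟩ | ⟨hq, _⟩
  · right
    refine ⟨m, ?_, hp, ?_⟩
    · rw [symmDiff_comm]; exact hmem
    · intro x hx; rw [symmDiff_comm] at hx; exact hmax x hx
  · exact Or.inl ⟨m, hmem, hq, hmax⟩

lemma twoPowSum_surj : ∀ o : Ordinal, ∀ l : Ordinal, o < 2 ^ l →
    ∃ p : Finset Ordinal, (∀ a ∈ p, a < l) ∧ twoPowSum p = o := by
  intro o
  induction o using Ordinal.induction with
  | h o ih =>
    intro l hol
    rcases eq_or_ne o 0 with rfl | ho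
    · exact ⟨∅, by simp, twoPowSum_empty⟩
    · set m := Ordinal.log 2 o with hm
      have h1 : 2 ^ m ≤ o := opow_log_le_self 2 ho
      have h2 : o < 2 ^ m + 2 ^ m := by
        rw [← two_opow_succ]
        have := lt_opow_succ_log_self (one_lt_two (α := Ordinal)) o
        rwa [← Ordinal.add_one_eq_succ] at this
      set r := o - 2 ^ m with hr
      have hor : 2 ^ m + r = o := Ordinal.add_sub_cancel_of_le h1
      have hrm : r < 2 ^ m := by
        rw [← hor] at h2
        exact (add_lt_add_iff_left _).mp h2
      have hro : r < o := lt_of_lt_of_le hrm h1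
      obtain ⟨p', hp'1, hp'2⟩ := ih r hro m hrm
      have hmp' : m ∉ p' := fun h => lt_irrefl m (hp'1 m h)
      have hml : m < l :=
        (opow_lt_opow_iff_right one_lt_two).mp (lt_of_le_of_lt h1 hol)
      refine ⟨insert m p', ?_, ?_⟩
      · intro a ha
        rcases Finset.mem_insert.mp ha with rfl | ha
        · exact hml
        · exact lt_trans (hp'1 a ha) hml
      · have hne : (insert m p').Nonempty := ⟨m, Finset.mem_insert_self m p'⟩
        have hM : (insert m p').max' hne = m := by
          apply le_antisymm
          · apply Finset.max'_le
            intro y hy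
            rcases Finset.mem_insert.mp hy with rfl | hy
            · exact le_rfl
            · exact le_of_lt (hp'1 y hy)
          · exact Finset.le_max' _ _ (Finset.mem_insert_self m p')
        rw [twoPowSum_eq _ hne, hM, Finset.erase_insert hmp', hp'2, hor]

/-- `p ↦ Σ 2^{p_i}` is an order isomorphism from the finite subsets of `λ` with the
top-down lexicographic order onto the ordinal `2 ^ λ`. -/
theorem twoPowSum_orderIso (l : Ordinal) :
    (∀ p : Finset Ordinal, (∀ a ∈ p, a < l) → twoPowSum p < (2 : Ordinal) ^ l) ∧
    (∀ o : Ordinal, o < (2 : Ordinal) ^ l →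
      ∃ p : Finset Ordinal, (∀ a ∈ p, a < l) ∧ twoPowSum p = o) ∧
    (∀ p q : Finset Ordinal, (∀ a ∈ p, a < l) → (∀ a ∈ q, a < l) →
      (tdLex p q ↔ twoPowSum p < twoPowSum q)) := by
  refine ⟨fun p hp => twoPowSum_lt p l hp, fun o ho => twoPowSum_surj o l ho, ?_⟩
  intro p q _ _
  constructor
  · exact tdLex_lt p q
  · intro h
    have hne : p ≠ q := fun he => by rw [he] at h; exact lt_irrefl _ h
    rcases tdLex_total p q hne with ht | ht
    · exact ht
    · exact absurd (tdLex_lt q p ht) (not_lt.mpr (le_of_lt h))
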